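/- The relation ~ is an equivalence relation on {1,…,n}. That is: i ~ i for all i; i ~ j implies j ~ i; and if i ~ j and j ~ k then i ~ k. -/
import Mathlib


/-- The relation `~` (connectedness of coordinates) is an
equivalence relation on `{1,…,n}`, under the hypotheses arising from
substituting Eisenhart's form of an orthogonally separable metric with
diagonal curvature into the second family of Levi-Civita equations. -/
theorem connectedness_is_equivalence (n : ℕ) (hn : 3 ≤ n)
    (σ σ' : Fin n → Fin n → ℝ → ℝ)
    (hderiv : ∀ i j : Fin n, i ≠ j → ∀ x : ℝ, HasDerivAt (σ i j) (σ' i j x) x)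
    (hne : ∀ i j : Fin n, i ≠ j → ∀ s t : ℝ, σ i j s + σ j i t ≠ 0)
    (heq : ∀ i j k : Fin n, i ≠ j → j ≠ k → i ≠ k → ∀ s t u : ℝ,
      σ' j i t * σ' k i u * (σ j k t + σ k j u)
        - σ' j i t * σ' k j u * (σ k i u + σ i k s)
        - σ' k i u * σ' j k t * (σ i j s + σ j i t) = 0) :
    Equivalence (fun i j : Fin n =>
      i = j ∨ ((∃ x, σ' i j x ≠ 0) ∨ (∃ x, σ' j i x ≠ 0)) ∨
        ∃ k, k ≠ i ∧ k ≠ j ∧ (∃ x, σ' k i x ≠ 0) ∧ (∃ x, σ' k j x ≠ 0)) := by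
  -- Lemma B : nonvanishing of σ'_{ij} and σ'_{jk} forces nonvanishing of σ'_{ik}.
  have lemB : ∀ i j k : Fin n, i ≠ j → j ≠ k → i ≠ k →
      (∃ x, σ' i j x ≠ 0) → (∃ x, σ' j k x ≠ 0) → (∃ x, σ' i k x ≠ 0) := by
    intro i j k hij hjk hik ⟨t, ht⟩ ⟨u, hu⟩
    by_contra h
    push_neg at h
    have h1 := heq k i j hik.symm hij hjk.symm 0 t u
    rw [h t] at h1
    have h1' : σ' j k u * σ' i j t * (σ k i 0 + σ i k t) = 0 := by
      linear_combination -h1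
    exact (mul_ne_zero (mul_ne_zero hu ht) (hne k i hik.symm 0 t)) h1'
  -- Lemma C : nonvanishing of σ'_{ij} and σ'_{kj} forces a strong connection of i and k.
  have lemC : ∀ i j k : Fin n, i ≠ j → k ≠ j → i ≠ k →
      (∃ x, σ' i j x ≠ 0) → (∃ x, σ' k j x ≠ 0) →
      (∃ x, σ' i k x ≠ 0) ∨ (∃ x, σ' k i x ≠ 0) := by
    intro i j k hij hkj hik ⟨t, ht⟩ ⟨u, hu⟩
    by_contra h
    push_neg at h
    obtain ⟨hik0, hki0⟩ := h
    have h3 := heq j i k hij.symm hik hkj.symm 0 t u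
    rw [hki0 u, hik0 t] at h3
    have h4 : σ' i j t * σ' k j u * (σ i k t + σ k i u) = 0 := by
      linear_combination h3
    exact (mul_ne_zero (mul_ne_zero ht hu) (hne i k hik t u)) h4
  constructor
  · intro i; exact Or.inl rfl
  · intro i j h
    rcases h with h | h | ⟨m, h1, h2, h3, h4⟩
    · exact Or.inl h.symm
    · exact Or.inr (Or.inl h.symm)
    · exact Or.inr (Or.inr ⟨m, h2, h1, h4, h3⟩)
  · intro i j k hij hjk
    rcases hij with rfl | hij
    · exact hjk
    rcases hjk with rfl | hjk
    · exact Or.inr hij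
    by_cases hik : i = k
    · exact Or.inl hik
    by_cases hij' : i = j
    · subst hij'; exact Or.inr hjk
    by_cases hjk' : j = k
    · subst hjk'; exact Or.inr hij
    -- reformulation: from the "connected" clause extract a dominating index m
    have key : ∀ a b : Fin n, a ≠ b →
        (((∃ x, σ' a b x ≠ 0) ∨ (∃ x, σ' b a x ≠ 0)) ∨
          ∃ m, m ≠ a ∧ m ≠ b ∧ (∃ x, σ' m a x ≠ 0) ∧ (∃ x, σ' m b x ≠ 0)) →
        ∃ m, (m = a ∨ ∃ x, σ' m a x ≠ 0) ∧ (m = b ∨ ∃ x, σ' m b x ≠ 0) := by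
      intro a b hab h
      rcases h with (h | h) | ⟨m, _, _, h3, h4⟩
      · exact ⟨a, Or.inl rfl, Or.inr h⟩
      · exact ⟨b, Or.inr h, Or.inl rfl⟩
      · exact ⟨m, Or.inr h3, Or.inr h4⟩
    have keyrev : ∀ a b : Fin n, a ≠ b →
        (∃ m, (m = a ∨ ∃ x, σ' m a x ≠ 0) ∧ (m = b ∨ ∃ x, σ' m b x ≠ 0)) →
        (((∃ x, σ' a b x ≠ 0) ∨ (∃ x, σ' b a x ≠ 0)) ∨
          ∃ m, m ≠ a ∧ m ≠ b ∧ (∃ x, σ' m a x ≠ 0) ∧ (∃ x, σ' m b x ≠ 0)) := by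
      intro a b hab ⟨m, hma, hmb⟩
      rcases hma with rfl | hNa
      · rcases hmb with h | hNb
        · exact absurd h hab
        · exact Or.inl (Or.inl hNb)
      · rcases hmb with rfl | hNb
        · exact Or.inl (Or.inr hNa)
        · by_cases h1 : m = a
          · subst h1; exact Or.inl (Or.inl hNb)
          · by_cases h2 : m = b
            · subst h2; exact Or.inl (Or.inr hNa)
            · exact Or.inr ⟨m, h1, h2, hNa, hNb⟩
    obtain ⟨m1, h1i, h1j⟩ := key i j hij' hij
    obtain ⟨m2, h2j, h2k⟩ := key j k hjk' hjk
    refine Or.inr (keyrev i k hik ?_)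
    by_cases hm : m1 = m2
    · subst hm; exact ⟨m1, h1i, h2k⟩
    by_cases hm1j : m1 = j
    · -- m1 = j : so σ'_{j i} and σ'_{m2 j} are nonconstant
      have hNji : ∃ x, σ' j i x ≠ 0 :=
        hm1j ▸ (h1i.resolve_left (fun h => hij' (h.symm.trans hm1j)))
      have hN2j : ∃ x, σ' m2 j x ≠ 0 :=
        h2j.resolve_left (fun h => hm (hm1j.trans h.symm))
      by_cases hm2i : m2 = i
      · exact ⟨m2, Or.inl hm2i, h2k⟩
      · have hm2j : m2 ≠ j := fun h => hm (hm1j.trans h.symm)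
        exact ⟨m2, Or.inr (lemB m2 j i hm2j (Ne.symm hij') hm2i hN2j hNji), h2k⟩
    have hN1j : ∃ x, σ' m1 j x ≠ 0 := h1j.resolve_left hm1j
    by_cases hm2j : m2 = j
    · -- m2 = j : σ'_{m1 j}, σ'_{j k} nonconstant
      have hNjk : ∃ x, σ' j k x ≠ 0 :=
        hm2j ▸ (h2k.resolve_left (fun h => hjk' (hm2j.symm.trans h)))
      by_cases hm1k : m1 = k
      · exact ⟨m1, h1i, Or.inl hm1k⟩
      · exact ⟨m1, h1i, Or.inr (lemB m1 j k hm1j hjk' hm1k hN1j hNjk)⟩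
    have hN2j : ∃ x, σ' m2 j x ≠ 0 := h2j.resolve_left hm2j
    rcases lemC m1 j m2 hm1j hm2j hm hN1j hN2j with hN12 | hN21
    · -- σ'_{m1 m2} nonconstant : push along h2k
      by_cases hm2k : m2 = k
      · exact ⟨m1, h1i, Or.inr (hm2k ▸ hN12)⟩
      · have hN2k : ∃ x, σ' m2 k x ≠ 0 := h2k.resolve_left hm2k
        by_cases hm1k : m1 = k
        · exact ⟨m1, h1i, Or.inl hm1k⟩
        · exact ⟨m1, h1i, Or.inr (lemB m1 m2 k hm hm2k hm1k hN12 hN2k)⟩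
    · -- σ'_{m2 m1} nonconstant : push along h1i
      by_cases hm1i : m1 = i
      · exact ⟨m2, Or.inr (hm1i ▸ hN21), h2k⟩
      · have hN1i : ∃ x, σ' m1 i x ≠ 0 := h1i.resolve_left hm1i
        by_cases hm2i : m2 = i
        · exact ⟨m2, Or.inl hm2i, h2k⟩
        · exact ⟨m2, Or.inr (lemB m2 m1 i (Ne.symm hm) hm1i hm2i hN21 hN1i), h2k⟩
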